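/- Let p be a prime and let l, m be natural numbers with 1 ≤ l ≤ m. Then v_p(binom(m, l)) ≤ ⌊log_p m⌋ - v_p(l), where v_p denotes the p-adic valuation of a natural number and ⌊log_p m⌋ = Nat.log p m. Equivalently, padicValNat p (Nat.choose m l) + padicValNat p l ≤ Nat.log p m. -/

import Mathlib

theorem padicValNat_choose_le (p : ℕ) (hp : p.Prime) (l m : ℕ) (hl : 1 ≤ l) (hlm : l ≤ m) :
    padicValNat p (Nat.choose m l) + padicValNat p l ≤ Nat.log p m := by
  haveI : Fact p.Prime := ⟨hp⟩
  set v := padicValNat p l with hv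
  rw [padicValNat_choose (p := p) (b := Nat.log p m + 1) hlm (by omega)]
  have hsub : ((Finset.Ico 1 (Nat.log p m + 1)).filter
      fun i => p ^ i ≤ l % p ^ i + (m - l) % p ^ i) ⊆ Finset.Ico (v + 1) (Nat.log p m + 1) := by
    intro i hi
    simp only [Finset.mem_filter, Finset.mem_Ico] at hi ⊢
    refine ⟨?_, hi.1.2⟩
    by_contra h
    push_neg at h
    have hdvd : p ^ i ∣ l :=
      dvd_trans (pow_dvd_pow p (by omega : i ≤ v)) pow_padicValNat_dvd
    have hmod : l % p ^ i = 0 := Nat.mod_eq_zero_of_dvd hdvd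
    have hlt : (m - l) % p ^ i < p ^ i := Nat.mod_lt _ (pow_pos hp.pos i)
    omega
  have hcard := Finset.card_le_card hsub
  rw [Nat.card_Ico] at hcard
  have hvlog : v ≤ Nat.log p m :=
    le_trans (padicValNat_le_nat_log l) (Nat.log_mono_right hlm)
  omega
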